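/- Quantum L¹ smooth support uncertainty principle, commutative finite-dimensional case: if k > 0 and F is a k-transform, then for every nonzero x : Fin n → ℂ and all ε, η ∈ [0,1], S_ε^{1,d}(x) * S_η^{1,τ}(F x) ≥ k * (1 − ε) * (1 − η). -/

import Mathlib

open Finset

/-- Weighted `p`-norm on `Fin n → ℂ` with weight `d`. -/
noncomputable def wnorm {n : ℕ} (d : Fin n → ℝ) (p : ℝ) (x : Fin n → ℂ) : ℝ :=
  (∑ i, d i * ‖x i‖ ^ p) ^ (1 / p)

/-- Sup (infinity) norm on `Fin n → ℂ`. -/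
noncomputable def inorm {n : ℕ} (x : Fin n → ℂ) : ℝ :=
  ⨆ i, ‖x i‖

/-- `G` is the adjoint of `F` with respect to the weighted inner products with
weights `d` and `τ`. -/
def IsAdjointPair {n m : ℕ} (d : Fin n → ℝ) (τ : Fin m → ℝ)
    (F : (Fin n → ℂ) →ₗ[ℂ] (Fin m → ℂ)) (G : (Fin m → ℂ) →ₗ[ℂ] (Fin n → ℂ)) : Prop :=
  ∀ (x : Fin n → ℂ) (u : Fin m → ℂ),
    ∑ j, (τ j : ℂ) * (starRingEnd ℂ) (F x j) * u j
      = ∑ i, (d i : ℂ) * (starRingEnd ℂ) (x i) * G u i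

/-- The `(p, ε)` smooth support of `x` with respect to the weight `d`. -/
noncomputable def smoothSupp {n : ℕ} (d : Fin n → ℝ) (p ε : ℝ) (x : Fin n → ℂ) : ℝ :=
  sInf { s : ℝ | ∃ h : Fin n → ℝ, (∀ i, 0 ≤ h i) ∧ (∀ i, h i ≤ 1) ∧
    wnorm d p (fun i => ((1 - h i : ℝ) : ℂ) * x i) ≤ ε * wnorm d p x ∧
    s = ∑ i, if x i = 0 then 0 else d i * h i }

lemma wnorm_one_eq {n : ℕ} (d : Fin n → ℝ) (x : Fin n → ℂ) :
    wnorm d 1 x = ∑ i, d i * ‖x i‖ := by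
  simp [wnorm, Real.rpow_one]

lemma abs_le_inorm {n : ℕ} (x : Fin n → ℂ) (i : Fin n) :
    ‖x i‖ ≤ inorm x := by
  show ‖x i‖ ≤ ⨆ j, ‖x j‖
  exact le_ciSup (f := fun j => ‖x j‖)
    (Set.Finite.bddAbove (Set.finite_range _)) i

lemma inorm_nonneg' {n : ℕ} (x : Fin n → ℂ) : 0 ≤ inorm x :=
  Real.iSup_nonneg fun i => norm_nonneg _

lemma inorm_le' {n : ℕ} (hn : 0 < n) (x : Fin n → ℂ) {c : ℝ}
    (h : ∀ i, ‖x i‖ ≤ c) : inorm x ≤ c := by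
  haveI : Nonempty (Fin n) := Fin.pos_iff_nonempty.mp hn
  exact ciSup_le h

lemma wnorm_one_nonneg {n : ℕ} (d : Fin n → ℝ) (hd : ∀ i, 0 < d i) (x : Fin n → ℂ) :
    0 ≤ wnorm d 1 x := by
  rw [wnorm_one_eq]
  exact Finset.sum_nonneg fun i _ => mul_nonneg (hd i).le (norm_nonneg _)

/-- Duality bound: the adjoint of an `L¹ → L∞` contraction is an `L¹ → L∞` contraction. -/
lemma adj_bound {n m : ℕ} (hn : 0 < n)
    (d : Fin n → ℝ) (τ : Fin m → ℝ) (hd : ∀ i, 0 < d i) (hτ : ∀ j, 0 < τ j)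
    (F : (Fin n → ℂ) →ₗ[ℂ] (Fin m → ℂ)) (G : (Fin m → ℂ) →ₗ[ℂ] (Fin n → ℂ))
    (hadj : IsAdjointPair d τ F G)
    (hF1 : ∀ x, inorm (F x) ≤ wnorm d 1 x)
    (u : Fin m → ℂ) : inorm (G u) ≤ wnorm τ 1 u := by
  apply inorm_le' hn
  intro i
  set e : Fin n → ℂ := Pi.single i 1 with he
  have key := hadj e u
  have hrhs : ∑ i', (d i' : ℂ) * (starRingEnd ℂ) (e i') * G u i' = (d i : ℂ) * G u i := by
    rw [Fintype.sum_eq_single i]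
    · simp [he]
    · intro i' hi'
      simp [he, Pi.single_eq_of_ne hi']
  have hFe : ∀ j, ‖F e j‖ ≤ d i := by
    intro j
    refine le_trans (abs_le_inorm _ j) (le_trans (hF1 e) (le_of_eq ?_))
    rw [wnorm_one_eq, Fintype.sum_eq_single i]
    · simp [he]
    · intro i' hi'
      simp [he, Pi.single_eq_of_ne hi']
  have habs : d i * ‖G u i‖ ≤ d i * wnorm τ 1 u := by
    have h1 : d i * ‖G u i‖ = ‖(d i : ℂ) * G u i‖ := by
      rw [norm_mul, Complex.norm_of_nonneg (hd i).le]
    rw [h1, ← hrhs, ← key]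
    calc ‖∑ j, (τ j : ℂ) * (starRingEnd ℂ) (F e j) * u j‖
        ≤ ∑ j, ‖(τ j : ℂ) * (starRingEnd ℂ) (F e j) * u j‖ :=
          norm_sum_le _ _
      _ ≤ ∑ j, d i * (τ j * ‖u j‖) := by
          apply Finset.sum_le_sum
          intro j _
          rw [norm_mul, norm_mul, Complex.norm_of_nonneg (hτ j).le, Complex.norm_conj]
          have h2 : τ j * ‖F e j‖ * ‖u j‖
              ≤ τ j * d i * ‖u j‖ := by
            apply mul_le_mul_of_nonneg_right _ (norm_nonneg _)
            exact mul_le_mul_of_nonneg_left (hFe j) (hτ j).le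
          linarith [h2]
      _ = d i * wnorm τ 1 u := by
          rw [wnorm_one_eq, Finset.mul_sum]
  exact le_of_mul_le_mul_left habs (hd i)

/-- If `h` is admissible for `x` at level `ε`, then `(1-ε)‖x‖₁ ≤ T_h ‖x‖∞`. -/
lemma side_bound {n : ℕ} (d : Fin n → ℝ) (hd : ∀ i, 0 < d i) (ε : ℝ) (x : Fin n → ℂ)
    (h : Fin n → ℝ) (hh0 : ∀ i, 0 ≤ h i) (hh1 : ∀ i, h i ≤ 1)
    (hcond : wnorm d 1 (fun i => ((1 - h i : ℝ) : ℂ) * x i) ≤ ε * wnorm d 1 x) :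
    (1 - ε) * wnorm d 1 x ≤ (∑ i, if x i = 0 then 0 else d i * h i) * inorm x := by
  have split : wnorm d 1 x
      = (∑ i, d i * h i * ‖x i‖)
        + ∑ i, d i * (1 - h i) * ‖x i‖ := by
    rw [wnorm_one_eq, ← Finset.sum_add_distrib]
    exact Finset.sum_congr rfl fun i _ => by ring
  have t1 : ∑ i, d i * h i * ‖x i‖
      ≤ (∑ i, if x i = 0 then 0 else d i * h i) * inorm x := by
    rw [Finset.sum_mul]
    apply Finset.sum_le_sum
    intro i _
    by_cases hxi : x i = 0
    · simp [hxi]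
    · rw [if_neg hxi]
      exact mul_le_mul_of_nonneg_left (abs_le_inorm x i)
        (mul_nonneg (hd i).le (hh0 i))
  have t2 : ∑ i, d i * (1 - h i) * ‖x i‖ ≤ ε * wnorm d 1 x := by
    have heq : ∑ i, d i * (1 - h i) * ‖x i‖
        = wnorm d 1 (fun i => ((1 - h i : ℝ) : ℂ) * x i) := by
      rw [wnorm_one_eq]
      apply Finset.sum_congr rfl
      intro i _
      rw [norm_mul, Complex.norm_of_nonneg (by linarith [hh1 i])]
      ring
    rw [heq]
    exact hcond
  linarith

/-- Quantum L¹ smooth support uncertainty principle, commutative finite-dimensional case. -/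
theorem quantum_L1_smooth_support_uncertainty {n m : ℕ} (hn : 0 < n) (hm : 0 < m)
    (d : Fin n → ℝ) (τ : Fin m → ℝ) (hd : ∀ i, 0 < d i) (hτ : ∀ j, 0 < τ j)
    (k : ℝ) (hk : 0 < k)
    (F : (Fin n → ℂ) →ₗ[ℂ] (Fin m → ℂ)) (G : (Fin m → ℂ) →ₗ[ℂ] (Fin n → ℂ))
    (hadj : IsAdjointPair d τ F G)
    (hF1 : ∀ x, inorm (F x) ≤ wnorm d 1 x)
    (hFk : ∀ x, k * inorm x ≤ inorm (G (F x)))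
    (x : Fin n → ℂ) (hx : x ≠ 0)
    (ε η : ℝ) (hε : ε ∈ Set.Icc (0:ℝ) 1) (hη : η ∈ Set.Icc (0:ℝ) 1) :
    smoothSupp d 1 ε x * smoothSupp τ 1 η (F x) ≥ k * (1 - ε) * (1 - η) := by
  obtain ⟨hε0, hε1⟩ := hε
  obtain ⟨hη0, hη1⟩ := hη
  set SA : Set ℝ := { s : ℝ | ∃ h : Fin n → ℝ, (∀ i, 0 ≤ h i) ∧ (∀ i, h i ≤ 1) ∧
    wnorm d 1 (fun i => ((1 - h i : ℝ) : ℂ) * x i) ≤ ε * wnorm d 1 x ∧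
    s = ∑ i, if x i = 0 then 0 else d i * h i } with hSA
  set SB : Set ℝ := { s : ℝ | ∃ h : Fin m → ℝ, (∀ j, 0 ≤ h j) ∧ (∀ j, h j ≤ 1) ∧
    wnorm τ 1 (fun j => ((1 - h j : ℝ) : ℂ) * F x j) ≤ η * wnorm τ 1 (F x) ∧
    s = ∑ j, if F x j = 0 then 0 else τ j * h j } with hSB
  have hgoal : smoothSupp d 1 ε x = sInf SA := rfl
  have hgoalB : smoothSupp τ 1 η (F x) = sInf SB := rfl
  rw [hgoal, hgoalB, ge_iff_le]
  -- nonemptiness of both sets (take h ≡ 1)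
  have hAne : SA.Nonempty := by
    refine ⟨∑ i, if x i = 0 then 0 else d i * 1, fun _ => 1, fun _ => zero_le_one,
      fun _ => le_rfl, ?_, rfl⟩
    have : wnorm d 1 (fun i => ((1 - 1 : ℝ) : ℂ) * x i) = 0 := by
      rw [wnorm_one_eq]
      simp
    rw [this]
    exact mul_nonneg hε0 (wnorm_one_nonneg d hd x)
  have hBne : SB.Nonempty := by
    refine ⟨∑ j, if F x j = 0 then 0 else τ j * 1, fun _ => 1, fun _ => zero_le_one,
      fun _ => le_rfl, ?_, rfl⟩
    have : wnorm τ 1 (fun j => ((1 - 1 : ℝ) : ℂ) * F x j) = 0 := by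
      rw [wnorm_one_eq]
      simp
    rw [this]
    exact mul_nonneg hη0 (wnorm_one_nonneg τ hτ (F x))
  have hAnn : ∀ a ∈ SA, 0 ≤ a := by
    rintro a ⟨h, hh0, _, _, rfl⟩
    apply Finset.sum_nonneg
    intro i _
    by_cases hxi : x i = 0
    · simp [hxi]
    · rw [if_neg hxi]; exact mul_nonneg (hd i).le (hh0 i)
  have hBnn : ∀ b ∈ SB, 0 ≤ b := by
    rintro b ⟨g, hg0, _, _, rfl⟩
    apply Finset.sum_nonneg
    intro j _
    by_cases hxj : F x j = 0
    · simp [hxj]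
    · rw [if_neg hxj]; exact mul_nonneg (hτ j).le (hg0 j)
  -- positivity of ‖x‖∞
  have hXpos : 0 < inorm x := by
    obtain ⟨i, hxi⟩ : ∃ i, x i ≠ 0 := by
      by_contra hcon
      push_neg at hcon
      exact hx (funext hcon)
    exact lt_of_lt_of_le (norm_pos_iff.mpr hxi) (abs_le_inorm x i)
  -- key pairwise bound
  have key : ∀ a ∈ SA, ∀ b ∈ SB, k * (1 - ε) * (1 - η) ≤ a * b := by
    rintro a ⟨h, hh0, hh1, hhc, rfl⟩ b ⟨g, hg0, hg1, hgc, rfl⟩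
    set a := ∑ i, if x i = 0 then 0 else d i * h i with ha
    set b := ∑ j, if F x j = 0 then 0 else τ j * g j with hb
    have ha0 : 0 ≤ a := hAnn a ⟨h, hh0, hh1, hhc, rfl⟩
    have hb0 : 0 ≤ b := hBnn b ⟨g, hg0, hg1, hgc, rfl⟩
    have f1 : (1 - ε) * wnorm d 1 x ≤ a * inorm x :=
      side_bound d hd ε x h hh0 hh1 hhc
    have f2 : (1 - η) * wnorm τ 1 (F x) ≤ b * inorm (F x) :=
      side_bound τ hτ η (F x) g hg0 hg1 hgc
    have f3 : inorm (F x) ≤ wnorm d 1 x := hF1 x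
    have f4 : k * inorm x ≤ wnorm τ 1 (F x) :=
      le_trans (hFk x) (adj_bound hn d τ hd hτ F G hadj hF1 (F x))
    have chain : k * (1 - ε) * (1 - η) * inorm x ≤ a * b * inorm x := by
      calc k * (1 - ε) * (1 - η) * inorm x
          = (1 - ε) * ((1 - η) * (k * inorm x)) := by ring
        _ ≤ (1 - ε) * ((1 - η) * wnorm τ 1 (F x)) := by
            apply mul_le_mul_of_nonneg_left _ (by linarith)
            exact mul_le_mul_of_nonneg_left f4 (by linarith)
        _ ≤ (1 - ε) * (b * inorm (F x)) :=
            mul_le_mul_of_nonneg_left f2 (by linarith)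
        _ ≤ (1 - ε) * (b * wnorm d 1 x) := by
            apply mul_le_mul_of_nonneg_left _ (by linarith)
            exact mul_le_mul_of_nonneg_left f3 hb0
        _ = b * ((1 - ε) * wnorm d 1 x) := by ring
        _ ≤ b * (a * inorm x) := mul_le_mul_of_nonneg_left f1 hb0
        _ = a * b * inorm x := by ring
    exact le_of_mul_le_mul_right chain hXpos
  -- conclude via infima
  rcases eq_or_lt_of_le hε1 with hε1' | hε1'
  · have : k * (1 - ε) * (1 - η) = 0 := by rw [← hε1']; ring
    rw [this]
    exact mul_nonneg (Real.sInf_nonneg hAnn) (Real.sInf_nonneg hBnn)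
  rcases eq_or_lt_of_le hη1 with hη1' | hη1'
  · have : k * (1 - ε) * (1 - η) = 0 := by rw [← hη1']; ring
    rw [this]
    exact mul_nonneg (Real.sInf_nonneg hAnn) (Real.sInf_nonneg hBnn)
  set c := k * (1 - ε) * (1 - η) with hc
  have hcpos : 0 < c := by
    apply mul_pos (mul_pos hk (by linarith)) (by linarith)
  obtain ⟨a₀, ha₀⟩ := hAne
  have ha₀nn : 0 ≤ a₀ := hAnn a₀ ha₀
  -- every b ∈ SB is positive
  have hbpos : ∀ b ∈ SB, 0 < b := by
    intro b hbmem
    have h1 := key a₀ ha₀ b hbmem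
    have h2 := hBnn b hbmem
    nlinarith
  obtain ⟨b₀, hb₀⟩ := hBne
  have hIA : c / b₀ ≤ sInf SA := by
    apply le_csInf ⟨a₀, ha₀⟩
    intro a hamem
    rw [div_le_iff₀ (hbpos b₀ hb₀)]
    exact key a hamem b₀ hb₀
  have hIApos : 0 < sInf SA :=
    lt_of_lt_of_le (div_pos hcpos (hbpos b₀ hb₀)) hIA
  have hIB : c / sInf SA ≤ sInf SB := by
    apply le_csInf ⟨b₀, hb₀⟩
    intro b hbmem
    rw [div_le_iff₀ hIApos]
    have hIA' : c / b ≤ sInf SA := by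
      apply le_csInf ⟨a₀, ha₀⟩
      intro a hamem
      rw [div_le_iff₀ (hbpos b hbmem)]
      exact key a hamem b hbmem
    calc c = (c / b) * b := (div_mul_cancel₀ c (hbpos b hbmem).ne').symm
      _ ≤ sInf SA * b := mul_le_mul_of_nonneg_right hIA' (hbpos b hbmem).le
      _ = b * sInf SA := by ring
  calc c = (c / sInf SA) * sInf SA := (div_mul_cancel₀ c hIApos.ne').symm
    _ ≤ sInf SB * sInf SA := mul_le_mul_of_nonneg_right hIB hIApos.le
    _ = sInf SA * sInf SB := mul_comm _ _
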